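/- Let E and F be nonempty convex sets in ℝⁿ. The following are equivalent: (a) every vector u ∈ ℝⁿ is uniquely expressible as u = y + z with y ∈ E and z ∈ F (uniqueness meaning: if u = y₁ + z₁ = y₂ + z₂ with y₁, y₂ ∈ E and z₁, z₂ ∈ F, then y₁ = y₂ and z₁ = z₂); (b) E and F are complementary planes, i.e., there exist vectors c₁, c₂ ∈ ℝⁿ and linear subspaces S₁, S₂ of ℝⁿ with S₁ + S₂ = ℝⁿ and S₁ ∩ S₂ = {0} such that E = c₁ + S₁ and F = c₂ + S₂. -/
import Mathlib


open Pointwise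

private lemma cone_of_span {V : Type*} [AddCommGroup V] [Module ℝ V]
    {C : Set V} (hC : Convex ℝ C) {c : V} (hc : c ∈ C) {v : V}
    (hv : v ∈ Submodule.span ℝ ((· - c) '' C)) :
    ∃ t : ℝ, 0 ≤ t ∧ ∃ a ∈ C, ∃ b ∈ C, v = t • (a - b) := by
  induction hv using Submodule.span_induction with
  | mem x hx =>
      obtain ⟨a, ha, rfl⟩ := hx
      exact ⟨1, zero_le_one, a, ha, c, hc, by simp⟩
  | zero => exact ⟨0, le_rfl, c, hc, c, hc, by simp⟩
  | add x y hx hy ihx ihy =>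
      obtain ⟨t₁, ht₁, a₁, ha₁, b₁, hb₁, rfl⟩ := ihx
      obtain ⟨t₂, ht₂, a₂, ha₂, b₂, hb₂, rfl⟩ := ihy
      rcases eq_or_lt_of_le (add_nonneg ht₁ ht₂ : (0:ℝ) ≤ t₁ + t₂) with h | h
      · have h1 : t₁ = 0 := by linarith
        have h2 : t₂ = 0 := by linarith
        exact ⟨0, le_rfl, c, hc, c, hc, by simp [h1, h2]⟩
      · have hne : t₁ + t₂ ≠ 0 := ne_of_gt h
        have hs1 : (0:ℝ) ≤ t₁ / (t₁ + t₂) := div_nonneg ht₁ h.le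
        have hs2 : (0:ℝ) ≤ t₂ / (t₁ + t₂) := div_nonneg ht₂ h.le
        have hsum : t₁ / (t₁ + t₂) + t₂ / (t₁ + t₂) = 1 := by field_simp
        refine ⟨t₁ + t₂, h.le,
          (t₁ / (t₁ + t₂)) • a₁ + (t₂ / (t₁ + t₂)) • a₂, hC ha₁ ha₂ hs1 hs2 hsum,
          (t₁ / (t₁ + t₂)) • b₁ + (t₂ / (t₁ + t₂)) • b₂, hC hb₁ hb₂ hs1 hs2 hsum, ?_⟩
        match_scalars <;> field_simp <;> ring
  | smul r x hx ihx =>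
      obtain ⟨t, ht, a, ha, b, hb, rfl⟩ := ihx
      rcases le_total 0 r with hr | hr
      · exact ⟨r * t, mul_nonneg hr ht, a, ha, b, hb, by rw [mul_smul]⟩
      · exact ⟨(-r) * t, mul_nonneg (neg_nonneg.mpr hr) ht, b, hb, a, ha, by module⟩

theorem unique_decomposition_characterizes_complementary_planes
    (n : ℕ) (E F : Set (EuclideanSpace ℝ (Fin n)))
    (hEne : E.Nonempty) (hEconv : Convex ℝ E)
    (hFne : F.Nonempty) (hFconv : Convex ℝ F) :
    ((∀ u : EuclideanSpace ℝ (Fin n), ∃ y ∈ E, ∃ z ∈ F, u = y + z) ∧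
      (∀ u y₁ z₁ y₂ z₂ : EuclideanSpace ℝ (Fin n),
        y₁ ∈ E → z₁ ∈ F → y₂ ∈ E → z₂ ∈ F →
        u = y₁ + z₁ → u = y₂ + z₂ → y₁ = y₂ ∧ z₁ = z₂)) ↔
      (∃ (c₁ c₂ : EuclideanSpace ℝ (Fin n))
          (S₁ S₂ : Submodule ℝ (EuclideanSpace ℝ (Fin n))),
        S₁ ⊔ S₂ = ⊤ ∧ S₁ ⊓ S₂ = ⊥ ∧
        E = c₁ +ᵥ (S₁ : Set (EuclideanSpace ℝ (Fin n))) ∧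
        F = c₂ +ᵥ (S₂ : Set (EuclideanSpace ℝ (Fin n)))) := by
  constructor
  · rintro ⟨hex, huniq⟩
    obtain ⟨e₀, he₀⟩ := hEne
    obtain ⟨f₀, hf₀⟩ := hFne
    set S₁ : Submodule ℝ (EuclideanSpace ℝ (Fin n)) :=
      Submodule.span ℝ ((· - e₀) '' E) with hS₁def
    set S₂ : Submodule ℝ (EuclideanSpace ℝ (Fin n)) :=
      Submodule.span ℝ ((· - f₀) '' F) with hS₂def
    have hES₁ : ∀ x ∈ E, x - e₀ ∈ S₁ := fun x hx =>
      Submodule.subset_span ⟨x, hx, rfl⟩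
    have hFS₂ : ∀ x ∈ F, x - f₀ ∈ S₂ := fun x hx =>
      Submodule.subset_span ⟨x, hx, rfl⟩
    -- the key difference fact: E - E and F - F meet only in 0
    have hdiff : ∀ a ∈ E, ∀ b ∈ E, ∀ p ∈ F, ∀ q ∈ F, a - b = p - q → a = b := by
      intro a ha b hb p hp q hq h
      have hsum : a + q = b + p := by linear_combination (norm := abel) h
      exact (huniq (a + q) a q b p ha hq hb hp rfl hsum).1
    -- inf is trivial
    have hinf : S₁ ⊓ S₂ = ⊥ := by
      rw [eq_bot_iff]
      rintro v ⟨hv₁, hv₂⟩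
      simp only [Submodule.mem_bot]
      obtain ⟨t₁, ht₁, a, ha, b, hb, hv₁eq⟩ := cone_of_span hEconv he₀ hv₁
      obtain ⟨t₂, ht₂, p, hp, q, hq, hv₂eq⟩ := cone_of_span hFconv hf₀ hv₂
      rcases eq_or_lt_of_le ht₁ with h1 | h1
      · rw [hv₁eq, ← h1, zero_smul]
      rcases eq_or_lt_of_le ht₂ with h2 | h2
      · rw [hv₂eq, ← h2, zero_smul]
      set t : ℝ := max t₁ t₂ with htdef
      have ht : 0 < t := lt_max_of_lt_left h1
      have hs1 : t₁ / t ∈ Set.Icc (0:ℝ) 1 :=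
        ⟨div_nonneg ht₁ ht.le, div_le_one_of_le₀ (le_max_left _ _) ht.le⟩
      have hs2 : t₂ / t ∈ Set.Icc (0:ℝ) 1 :=
        ⟨div_nonneg ht₂ ht.le, div_le_one_of_le₀ (le_max_right _ _) ht.le⟩
      -- build points realizing t⁻¹ • v as differences in E and in F
      have ha' : (t₁ / t) • a + (1 - t₁ / t) • e₀ ∈ E :=
        hEconv ha he₀ hs1.1 (by linarith [hs1.2]) (by ring)
      have hb' : (t₁ / t) • b + (1 - t₁ / t) • e₀ ∈ E :=
        hEconv hb he₀ hs1.1 (by linarith [hs1.2]) (by ring)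
      have hp' : (t₂ / t) • p + (1 - t₂ / t) • f₀ ∈ F :=
        hFconv hp hf₀ hs2.1 (by linarith [hs2.2]) (by ring)
      have hq' : (t₂ / t) • q + (1 - t₂ / t) • f₀ ∈ F :=
        hFconv hq hf₀ hs2.1 (by linarith [hs2.2]) (by ring)
      have hv12 : t₁ • (a - b) = t₂ • (p - q) := by rw [← hv₁eq, hv₂eq]
      have key : ((t₁ / t) • a + (1 - t₁ / t) • e₀) - ((t₁ / t) • b + (1 - t₁ / t) • e₀)
          = ((t₂ / t) • p + (1 - t₂ / t) • f₀) - ((t₂ / t) • q + (1 - t₂ / t) • f₀) := by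
        calc ((t₁ / t) • a + (1 - t₁ / t) • e₀) - ((t₁ / t) • b + (1 - t₁ / t) • e₀)
            = (t₁ / t) • (a - b) := by module
          _ = t⁻¹ • (t₁ • (a - b)) := by rw [div_eq_inv_mul, mul_smul]
          _ = t⁻¹ • (t₂ • (p - q)) := by rw [hv12]
          _ = (t₂ / t) • (p - q) := by rw [div_eq_inv_mul, mul_smul]
          _ = ((t₂ / t) • p + (1 - t₂ / t) • f₀) - ((t₂ / t) • q + (1 - t₂ / t) • f₀) := by
              module
      have heq := hdiff _ ha' _ hb' _ hp' _ hq' key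
      have hsab : (t₁ / t) • a = (t₁ / t) • b := add_right_cancel heq
      have ht₁t : t₁ / t ≠ 0 := div_ne_zero h1.ne' ht.ne'
      have hab : a = b := smul_right_injective (EuclideanSpace ℝ (Fin n)) ht₁t hsab
      rw [hv₁eq, hab, sub_self, smul_zero]
    -- sup is everything
    have hsup : S₁ ⊔ S₂ = ⊤ := by
      rw [Submodule.eq_top_iff']
      intro x
      obtain ⟨y, hy, z, hz, hxyz⟩ := hex (x + e₀ + f₀)
      have hx : x = (y - e₀) + (z - f₀) := by linear_combination (norm := abel) hxyz
      rw [hx]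
      exact Submodule.add_mem_sup (hES₁ y hy) (hFS₂ z hz)
    refine ⟨e₀, f₀, S₁, S₂, hsup, hinf, ?_, ?_⟩
    · ext x
      simp only [Set.mem_vadd_set, vadd_eq_add]
      constructor
      · intro hx
        exact ⟨x - e₀, hES₁ x hx, by abel⟩
      · rintro ⟨s, hs, rfl⟩
        obtain ⟨y, hy, z, hz, hxyz⟩ := hex (s + e₀ + f₀)
        have hzf : z - f₀ ∈ S₁ ⊓ S₂ := by
          refine ⟨?_, hFS₂ z hz⟩
          have : z - f₀ = s - (y - e₀) := by linear_combination (norm := abel) -hxyz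
          rw [this]
          exact Submodule.sub_mem _ hs (hES₁ y hy)
        rw [hinf, Submodule.mem_bot, sub_eq_zero] at hzf
        have : e₀ + s = y := by
          rw [hzf] at hxyz
          linear_combination (norm := abel) hxyz
        rw [this]; exact hy
    · ext x
      simp only [Set.mem_vadd_set, vadd_eq_add]
      constructor
      · intro hx
        exact ⟨x - f₀, hFS₂ x hx, by abel⟩
      · rintro ⟨s, hs, rfl⟩
        obtain ⟨y, hy, z, hz, hxyz⟩ := hex (s + e₀ + f₀)
        have hye : y - e₀ ∈ S₁ ⊓ S₂ := by
          refine ⟨hES₁ y hy, ?_⟩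
          have : y - e₀ = s - (z - f₀) := by linear_combination (norm := abel) -hxyz
          rw [this]
          exact Submodule.sub_mem _ hs (hFS₂ z hz)
        rw [hinf, Submodule.mem_bot, sub_eq_zero] at hye
        have : f₀ + s = z := by
          rw [hye] at hxyz
          linear_combination (norm := abel) hxyz
        rw [this]; exact hz
  · rintro ⟨c₁, c₂, S₁, S₂, hsup, hinf, rfl, rfl⟩
    constructor
    · intro u
      have : u - c₁ - c₂ ∈ S₁ ⊔ S₂ := by rw [hsup]; trivial
      obtain ⟨s, hs, t, ht, hst⟩ := Submodule.mem_sup.mp this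
      refine ⟨c₁ + s, ⟨s, hs, rfl⟩, c₂ + t, ⟨t, ht, rfl⟩, ?_⟩
      linear_combination (norm := abel) -hst
    · rintro u y₁ z₁ y₂ z₂ ⟨s₁, hs₁, rfl⟩ ⟨t₁, ht₁, rfl⟩ ⟨s₂, hs₂, rfl⟩ ⟨t₂, ht₂, rfl⟩ h₁ h₂
      simp only [vadd_eq_add] at h₁ h₂
      have hst : s₁ - s₂ ∈ S₁ ⊓ S₂ := by
        refine ⟨Submodule.sub_mem _ hs₁ hs₂, ?_⟩
        have : s₁ - s₂ = t₂ - t₁ := by linear_combination (norm := abel) h₂ - h₁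
        rw [this]
        exact Submodule.sub_mem _ ht₂ ht₁
      rw [hinf, Submodule.mem_bot, sub_eq_zero] at hst
      have htt : t₁ = t₂ := by
        have : c₂ + t₁ = c₂ + t₂ := by
          rw [hst] at h₁; linear_combination (norm := abel) h₂ - h₁
        exact add_left_cancel this
      exact ⟨by rw [hst], by rw [htt]⟩
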